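/- Let F be a field, m, n ≥ 1, and (I, J) ∈ PP(m,n). Consider the perfect pairing Mat_{n×m}(F) × Mat_{m×n}(F) → F given by (T₁, T₂) ↦ tr(T₁ T₂). Then the annihilator of the staircase subspace L̄₁^{(I,J)} ⊆ Mat_{n×m}(F) with respect to this pairing equals the staircase subspace L̄₂^{(Q,P)} ⊆ Mat_{m×n}(F), where (Q, P) = (J_{+1} ∪ {1}, I_{−1} ∪ {m}) if 1 ∉ I and n ∉ J; (Q, P) = (J_{+1} ∖ {1}, I_{−1} ∖ {m}) if 1 ∈ I and n ∈ J; and (Q, P) = (J_{+1}, I_{−1}) otherwise. -/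

import Mathlib

open Matrix

/-- For `I = {i₁ < ⋯ < i_k}` and `J = {j₁ < ⋯ < j_k}`, the bound on the rows allowed
in column `lam` (1-indexed) of a staircase matrix: it is `j_l` when `i_l ≤ lam < i_{l+1}`
(where `l = #{i ∈ I : i ≤ lam}`), and `0` when `lam < i₁`. -/
def stairBound (I J : Finset ℕ) (lam : ℕ) : ℕ :=
  if (I.filter (· ≤ lam)).card = 0 then 0
  else (J.sort (· ≤ ·)).getD ((I.filter (· ≤ lam)).card - 1) 0

/-- The staircase subspace `L̄₁^{(I,J)} ⊆ Mat_{n×m}(F)` (rows and columns 0-indexed):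
column `lam` vanishes below row `j_l`, where `l = #{i ∈ I : i ≤ lam+1}`. -/
def stair (F : Type*) [Zero F] (m n : ℕ) (I J : Finset ℕ) :
    Set (Matrix (Fin n) (Fin m) F) :=
  {T | ∀ (a : Fin n) (lam : Fin m),
    stairBound I J ((lam : ℕ) + 1) < (a : ℕ) + 1 → T a lam = 0}

/-- Cyclic shift `X_{+1}` of a subset of `{1,…,N}` (with the convention `N+1 ≡ 1`). -/
def shiftUp (N : ℕ) (X : Finset ℕ) : Finset ℕ :=
  X.image fun x => if x = N then 1 else x + 1

/-- Cyclic shift `X_{-1}` of a subset of `{1,…,N}` (with the convention `0 ≡ N`). -/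
def shiftDown (N : ℕ) (X : Finset ℕ) : Finset ℕ :=
  X.image fun x => if x = 1 then N else x - 1

/-! ### Auxiliary lemmas -/

lemma list_le_get_iff : ∀ (L : List ℕ), L.Pairwise (· ≤ ·) →
    ∀ (t : ℕ) (ht : t < L.length) (a : ℕ),
      (a ≤ L.get ⟨t, ht⟩ ↔ (L.filter (· < a)).length ≤ t) := by
  intro L
  induction L with
  | nil => intro _ t ht; simp at ht
  | cons x L ih =>
    intro hs t ht a
    rw [List.pairwise_cons] at hs
    cases t with
    | zero =>
      simp only [List.get, Nat.le_zero, List.length_eq_zero_iff, List.filter_eq_nil_iff]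
      constructor
      · intro hax y hy
        rcases List.mem_cons.mp hy with rfl | hy
        · simpa using not_lt.mpr hax
        · simpa using not_lt.mpr (le_trans hax (hs.1 y hy))
      · intro h
        have := h x List.mem_cons_self
        simp at this
        omega
    | succ t =>
      simp only [List.length_cons, Nat.succ_lt_succ_iff] at ht
      by_cases hx : x < a
      · have : (x :: L).filter (· < a) = x :: L.filter (· < a) := by
          simp [List.filter_cons, hx]
        rw [this]
        simp only [List.length_cons, Nat.succ_le_succ_iff]
        exact ih hs.2 t ht a
      · have h1 : L.filter (· < a) = [] := by
          rw [List.filter_eq_nil_iff]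
          intro y hy
          simp only [decide_eq_true_eq, not_lt]
          exact le_trans (not_lt.mp hx) (hs.1 y hy)
        have : (x :: L).filter (· < a) = [] := by
          simp [List.filter_cons, hx, h1]
        rw [this]
        simp only [List.length_nil, Nat.zero_le, iff_true]
        exact le_trans (not_lt.mp hx) (hs.1 _ (L.get_mem ⟨t, ht⟩))

lemma sort_filter_length (J : Finset ℕ) (a : ℕ) :
    ((J.sort (· ≤ ·)).filter (· < a)).length = (J.filter (· < a)).card := by
  rw [List.Perm.length_eq ((J.sort_perm_toList (· ≤ ·)).filter _)]
  show _ = Multiset.card (J.1.filter _)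
  rw [← Multiset.coe_toList J.1, Multiset.filter_coe, Multiset.coe_card]
  rfl

lemma le_stairBound_iff (I J : Finset ℕ) (μ a : ℕ) (ha : 1 ≤ a)
    (hc : (I.filter (· ≤ μ)).card ≤ J.card) :
    a ≤ stairBound I J μ ↔ (J.filter (· < a)).card < (I.filter (· ≤ μ)).card := by
  unfold stairBound
  by_cases hl : (I.filter (· ≤ μ)).card = 0
  · rw [if_pos hl, hl]; omega
  · rw [if_neg hl]
    have hlen : (I.filter (· ≤ μ)).card - 1 < (J.sort (· ≤ ·)).length := by
      rw [Finset.length_sort]; omega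
    rw [List.getD_eq_get (i := ⟨_, hlen⟩),
      list_le_get_iff _ (Finset.pairwise_sort _ _) _ hlen a, sort_filter_length]
    omega

lemma shiftUp_injOn (n : ℕ) (J : Finset ℕ) (hJ : J ⊆ Finset.Icc 1 n) :
    Set.InjOn (fun x => if x = n then 1 else x + 1) ↑J := by
  intro x hx y hy h
  have hx' := Finset.mem_Icc.mp (hJ hx)
  have hy' := Finset.mem_Icc.mp (hJ hy)
  simp only at h
  split_ifs at h <;> omega

lemma shiftDown_injOn (m : ℕ) (I : Finset ℕ) (hI : I ⊆ Finset.Icc 1 m) :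
    Set.InjOn (fun x => if x = 1 then m else x - 1) ↑I := by
  intro x hx y hy h
  have hx' := Finset.mem_Icc.mp (hI hx)
  have hy' := Finset.mem_Icc.mp (hI hy)
  simp only at h
  split_ifs at h <;> omega

lemma card_shiftUp (n : ℕ) (J : Finset ℕ) (hJ : J ⊆ Finset.Icc 1 n) :
    (shiftUp n J).card = J.card :=
  Finset.card_image_of_injOn (shiftUp_injOn n J hJ)

lemma card_shiftDown (m : ℕ) (I : Finset ℕ) (hI : I ⊆ Finset.Icc 1 m) :
    (shiftDown m I).card = I.card :=
  Finset.card_image_of_injOn (shiftDown_injOn m I hI)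

lemma one_mem_shiftUp (n : ℕ) (J : Finset ℕ) (hJ : J ⊆ Finset.Icc 1 n) :
    1 ∈ shiftUp n J ↔ n ∈ J := by
  unfold shiftUp
  simp only [Finset.mem_image]
  constructor
  · rintro ⟨x, hx, h⟩
    have hx' := Finset.mem_Icc.mp (hJ hx)
    split_ifs at h with h'
    · exact h' ▸ hx
    · omega
  · intro h
    exact ⟨n, h, if_pos rfl⟩

lemma m_mem_shiftDown (m : ℕ) (I : Finset ℕ) (hm : 1 ≤ m) (hI : I ⊆ Finset.Icc 1 m) :
    m ∈ shiftDown m I ↔ 1 ∈ I := by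
  unfold shiftDown
  simp only [Finset.mem_image]
  constructor
  · rintro ⟨x, hx, h⟩
    have hx' := Finset.mem_Icc.mp (hI hx)
    split_ifs at h with h'
    · exact h' ▸ hx
    · omega
  · intro h
    exact ⟨1, h, if_pos rfl⟩

lemma card_filter_shiftUp (n : ℕ) (J : Finset ℕ) (hJ : J ⊆ Finset.Icc 1 n)
    (A : ℕ) (hA1 : 1 ≤ A) (hAn : A ≤ n) :
    ((shiftUp n J).filter (· ≤ A)).card
      = (J.filter (· < A)).card + (if n ∈ J then 1 else 0) := by
  unfold shiftUp
  rw [Finset.filter_image, Finset.card_image_of_injOn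
    ((shiftUp_injOn n J hJ).mono (Finset.filter_subset _ _))]
  have he : J.filter (fun x => (if x = n then 1 else x + 1) ≤ A)
      = J.filter (fun x => x < A ∨ x = n) := by
    apply Finset.filter_congr
    intro x hx
    have hx' := Finset.mem_Icc.mp (hJ hx)
    constructor <;> intro h' <;> split_ifs at * <;> omega
  rw [he, Finset.filter_or, Finset.card_union_of_disjoint, Finset.filter_eq']
  · split_ifs <;> simp
  · rw [Finset.disjoint_left]
    intro x hx hx'
    simp only [Finset.mem_filter] at hx hx'
    omega

lemma card_filter_shiftDown (m : ℕ) (I : Finset ℕ) (hI : I ⊆ Finset.Icc 1 m)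
    (L : ℕ) (hL1 : 1 ≤ L) (hLm : L ≤ m) :
    ((shiftDown m I).filter (· < L)).card + (if 1 ∈ I then 1 else 0)
      = (I.filter (· ≤ L)).card := by
  unfold shiftDown
  rw [Finset.filter_image, Finset.card_image_of_injOn
    ((shiftDown_injOn m I hI).mono (Finset.filter_subset _ _))]
  have he : I.filter (fun x => (if x = 1 then m else x - 1) < L)
      = I.filter (fun x => x ≤ L ∧ ¬ x = 1) := by
    apply Finset.filter_congr
    intro x hx
    have hx' := Finset.mem_Icc.mp (hI hx)
    constructor <;> intro h' <;> split_ifs at * <;> omega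
  have he2 : I.filter (fun x => (x ≤ L ∧ ¬ x = 1) ∨ x = 1)
      = I.filter (fun x => x ≤ L) := by
    apply Finset.filter_congr
    intro x hx
    have hx' := Finset.mem_Icc.mp (hI hx)
    omega
  rw [he, ← he2, Finset.filter_or, Finset.card_union_of_disjoint, Finset.filter_eq']
  · split_ifs <;> simp
  · rw [Finset.disjoint_left]
    intro x hx hx'
    simp only [Finset.mem_filter] at hx hx'
    omega

lemma key_stair (m n : ℕ) (hm : 1 ≤ m) (hn : 1 ≤ n)
    (I J : Finset ℕ) (hI : I ⊆ Finset.Icc 1 m) (hJ : J ⊆ Finset.Icc 1 n)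
    (hcard : I.card = J.card) (A L : ℕ)
    (hA1 : 1 ≤ A) (hAn : A ≤ n) (hL1 : 1 ≤ L) (hLm : L ≤ m) :
    (A ≤ stairBound I J L ↔
      ¬ (L ≤ stairBound
        (if 1 ∈ I ∧ n ∈ J then shiftUp n J \ {1}
          else if 1 ∉ I ∧ n ∉ J then shiftUp n J ∪ {1} else shiftUp n J)
        (if 1 ∈ I ∧ n ∈ J then shiftDown m I \ {m}
          else if 1 ∉ I ∧ n ∉ J then shiftDown m I ∪ {m} else shiftDown m I)
        A)) := by
  have hq := card_shiftUp n J hJ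
  have hp := card_shiftDown m I hI
  have hfu := card_filter_shiftUp n J hJ A hA1 hAn
  have hfd := card_filter_shiftDown m I hI L hL1 hLm
  have h1 : A ≤ stairBound I J L ↔
      (J.filter (· < A)).card < (I.filter (· ≤ L)).card :=
    le_stairBound_iff I J L A hA1 (le_trans (Finset.card_filter_le _ _) hcard.le)
  rw [h1]
  by_cases hcase1 : 1 ∈ I ∧ n ∈ J
  · simp only [if_pos hcase1]
    have h1q : 1 ∈ shiftUp n J := (one_mem_shiftUp n J hJ).mpr hcase1.2
    have hmp : m ∈ shiftDown m I := (m_mem_shiftDown m I hm hI).mpr hcase1.1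
    have eQ : ((shiftUp n J \ {1}).filter (· ≤ A)).card
        = ((shiftUp n J).filter (· ≤ A)).card - 1 := by
      rw [Finset.sdiff_singleton_eq_erase, Finset.filter_erase,
        Finset.card_erase_of_mem (Finset.mem_filter.mpr ⟨h1q, by simpa using hA1⟩)]
    have eP : ((shiftDown m I \ {m}).filter (· < L)).card
        = ((shiftDown m I).filter (· < L)).card := by
      rw [Finset.sdiff_singleton_eq_erase, Finset.filter_erase,
        Finset.erase_eq_of_notMem]
      intro hmem
      have := (Finset.mem_filter.mp hmem).2
      omega
    have hQcard : (shiftUp n J \ {1}).card = J.card - 1 := by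
      rw [Finset.sdiff_singleton_eq_erase, Finset.card_erase_of_mem h1q, hq]
    have hPcard : (shiftDown m I \ {m}).card = I.card - 1 := by
      rw [Finset.sdiff_singleton_eq_erase, Finset.card_erase_of_mem hmp, hp]
    have h2 : L ≤ stairBound (shiftUp n J \ {1}) (shiftDown m I \ {m}) A ↔
        ((shiftDown m I \ {m}).filter (· < L)).card
          < ((shiftUp n J \ {1}).filter (· ≤ A)).card := by
      apply le_stairBound_iff _ _ A L hL1
      have := Finset.card_filter_le (shiftUp n J \ {1}) (· ≤ A)
      omega
    rw [h2, eQ, eP]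
    have hIL : 1 ≤ (I.filter (· ≤ L)).card :=
      Finset.card_pos.mpr ⟨1, Finset.mem_filter.mpr ⟨hcase1.1, by simpa using hL1⟩⟩
    simp only [if_pos hcase1.1, if_pos hcase1.2] at hfu hfd
    omega
  · by_cases hcase2 : 1 ∉ I ∧ n ∉ J
    · simp only [if_neg hcase1, if_pos hcase2]
      have h1q : 1 ∉ shiftUp n J := fun h => hcase2.2 ((one_mem_shiftUp n J hJ).mp h)
      have hmp : m ∉ shiftDown m I := fun h => hcase2.1 ((m_mem_shiftDown m I hm hI).mp h)
      have eQ : ((shiftUp n J ∪ {1}).filter (· ≤ A)).card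
          = ((shiftUp n J).filter (· ≤ A)).card + 1 := by
        rw [Finset.filter_union, Finset.filter_singleton, if_pos (by simpa using hA1),
          Finset.card_union_of_disjoint (Finset.disjoint_singleton_right.mpr
            (fun h => h1q (Finset.mem_filter.mp h).1))]
        simp
      have eP : ((shiftDown m I ∪ {m}).filter (· < L)).card
          = ((shiftDown m I).filter (· < L)).card := by
        rw [Finset.filter_union, Finset.filter_singleton,
          if_neg (by simp; omega), Finset.union_empty]
      have hQcard : (shiftUp n J ∪ {1}).card = J.card + 1 := by
        rw [Finset.card_union_of_disjoint (Finset.disjoint_singleton_right.mpr h1q), hq]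
        simp
      have hPcard : (shiftDown m I ∪ {m}).card = I.card + 1 := by
        rw [Finset.card_union_of_disjoint (Finset.disjoint_singleton_right.mpr hmp), hp]
        simp
      have h2 : L ≤ stairBound (shiftUp n J ∪ {1}) (shiftDown m I ∪ {m}) A ↔
          ((shiftDown m I ∪ {m}).filter (· < L)).card
            < ((shiftUp n J ∪ {1}).filter (· ≤ A)).card := by
        apply le_stairBound_iff _ _ A L hL1
        have := Finset.card_filter_le (shiftUp n J ∪ {1}) (· ≤ A)
        omega
      rw [h2, eQ, eP]
      simp only [if_neg hcase2.1, if_neg hcase2.2] at hfu hfd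
      omega
    · simp only [if_neg hcase1, if_neg hcase2]
      have h2 : L ≤ stairBound (shiftUp n J) (shiftDown m I) A ↔
          ((shiftDown m I).filter (· < L)).card
            < ((shiftUp n J).filter (· ≤ A)).card := by
        apply le_stairBound_iff _ _ A L hL1
        have := Finset.card_filter_le (shiftUp n J) (· ≤ A)
        omega
      rw [h2]
      have hIL : 1 ∈ I → 1 ≤ (I.filter (· ≤ L)).card := fun h =>
        Finset.card_pos.mpr ⟨1, Finset.mem_filter.mpr ⟨h, by simpa using hL1⟩⟩
      by_cases h1I : 1 ∈ I
      · have hnJ : n ∉ J := fun h => hcase1 ⟨h1I, h⟩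
        simp only [if_pos h1I, if_neg hnJ] at hfu hfd
        have := hIL h1I
        omega
      · have hnJ : n ∈ J := by by_contra h; exact hcase2 ⟨h1I, h⟩
        simp only [if_neg h1I, if_pos hnJ] at hfu hfd
        omega

/-- The annihilator of the staircase subspace `L̄₁^{(I,J)} ⊆ Mat_{n×m}(F)` under the
trace pairing `(T₁, T₂) ↦ tr(T₁T₂)` is the staircase subspace `L̄₂^{(Q,P)} ⊆ Mat_{m×n}(F)`
where `(Q,P) = (J_{+1} ∪ {1}, I_{-1} ∪ {m})` if `1 ∉ I` and `n ∉ J`;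
`(Q,P) = (J_{+1} ∖ {1}, I_{-1} ∖ {m})` if `1 ∈ I` and `n ∈ J`;
and `(Q,P) = (J_{+1}, I_{-1})` otherwise. -/
theorem annihilator_stair (F : Type*) [Field F] (m n : ℕ) (hm : 1 ≤ m) (hn : 1 ≤ n)
    (I J : Finset ℕ) (hI : I ⊆ Finset.Icc 1 m) (hJ : J ⊆ Finset.Icc 1 n)
    (hcard : I.card = J.card) :
    {T₂ : Matrix (Fin m) (Fin n) F | ∀ T₁ ∈ stair F m n I J, (T₁ * T₂).trace = 0} =
      stair F n m
        (if 1 ∈ I ∧ n ∈ J then shiftUp n J \ {1}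
          else if 1 ∉ I ∧ n ∉ J then shiftUp n J ∪ {1} else shiftUp n J)
        (if 1 ∈ I ∧ n ∈ J then shiftDown m I \ {m}
          else if 1 ∉ I ∧ n ∉ J then shiftDown m I ∪ {m} else shiftDown m I) := by
  have hkey : ∀ (x : Fin n) (μ : Fin m),
      ((x : ℕ) + 1 ≤ stairBound I J ((μ : ℕ) + 1) ↔
        ¬ ((μ : ℕ) + 1 ≤ stairBound
          (if 1 ∈ I ∧ n ∈ J then shiftUp n J \ {1}
            else if 1 ∉ I ∧ n ∉ J then shiftUp n J ∪ {1} else shiftUp n J)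
          (if 1 ∈ I ∧ n ∈ J then shiftDown m I \ {m}
            else if 1 ∉ I ∧ n ∉ J then shiftDown m I ∪ {m} else shiftDown m I)
          ((x : ℕ) + 1))) := fun x μ =>
    key_stair m n hm hn I J hI hJ hcard ((x : ℕ) + 1) ((μ : ℕ) + 1)
      (by omega) (by omega) (by omega) (by omega)
  ext T₂
  simp only [Set.mem_setOf_eq, stair]
  constructor
  · intro h a lam hlt
    have hmem : single lam a (1 : F) ∈ stair F m n I J := by
      intro b ν hb
      by_cases hba : b = lam ∧ ν = a
      · exfalso
        obtain ⟨rfl, rfl⟩ := hba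
        have := (hkey b ν).mpr (by omega)
        omega
      · exact single_apply_of_ne (i := lam) (j := a) (i' := b) (j' := ν) (c := (1 : F)) (by tauto)
    have htr := h _ hmem
    have : (single lam a (1 : F) * T₂).trace = T₂ a lam := by
      simp [Matrix.trace, Matrix.diag, Matrix.mul_apply, single, ite_and,
        Finset.sum_ite_eq, Finset.sum_ite_eq']
    rw [this] at htr
    exact htr
  · intro h T₁ hT₁
    have htr : (T₁ * T₂).trace = ∑ x : Fin n, ∑ μ : Fin m, T₁ x μ * T₂ μ x := by
      simp [Matrix.trace, Matrix.diag, Matrix.mul_apply]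
    rw [htr]
    apply Finset.sum_eq_zero
    intro x _
    apply Finset.sum_eq_zero
    intro μ _
    by_cases hb : stairBound I J ((μ : ℕ) + 1) < (x : ℕ) + 1
    · rw [hT₁ x μ hb, zero_mul]
    · have h1 : (x : ℕ) + 1 ≤ stairBound I J ((μ : ℕ) + 1) := not_lt.mp hb
      have h2 := (hkey x μ).mp h1
      rw [h μ x (by omega), mul_zero]
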